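/- arXiv:0705.1435 — 2 statements merged into one kernel-verified Lean document; each statement's English description precedes it below -/
import Mathlib

section
/- For the 2×2 matrix M = [[-ν₁, ν₂],[ν₁, -ν₂]] with ν₁, ν₂ > 0, for every t ≥ 0 each entry of exp(tM) is at least the corresponding entry of e^{-t(ν₁+ν₂)}·Id, i.e. exp(tM)ᵢⱼ ≥ e^{-t(ν₁+ν₂)} δᵢⱼ. -/
open NormedSpace

section Aux

attribute [local instance] Matrix.linftyOpNormedRing Matrix.linftyOpNormedAlgebra

private lemma pow_entry_nonneg {A : Matrix (Fin 2) (Fin 2) ℝ} (hA : ∀ i j, 0 ≤ A i j) :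
    ∀ n : ℕ, ∀ i j, 0 ≤ (A ^ n) i j := by
  intro n
  induction n with
  | zero =>
    intro i j
    simp only [pow_zero, Matrix.one_apply]
    split <;> norm_num
  | succ n ih =>
    intro i j
    rw [pow_succ, Matrix.mul_apply]
    exact Finset.sum_nonneg fun k _ => mul_nonneg (ih i k) (hA k j)

private lemma one_le_exp_entry {A : Matrix (Fin 2) (Fin 2) ℝ} (hA : ∀ i j, 0 ≤ A i j)
    (i j : Fin 2) : (1 : Matrix (Fin 2) (Fin 2) ℝ) i j ≤ exp A i j := by
  have hsum : Summable fun n : ℕ => ((Nat.factorial n : ℝ)⁻¹) • A ^ n := expSeries_summable' (𝕂 := ℝ) A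
  rw [exp_eq_tsum (𝕂 := ℝ)]
  show (1 : Matrix (Fin 2) (Fin 2) ℝ) i j ≤ (∑' n : ℕ, ((Nat.factorial n : ℝ)⁻¹) • A ^ n) i j
  have h1 : Summable fun n : ℕ => (((Nat.factorial n : ℝ)⁻¹) • A ^ n) i := by
    exact Pi.summable.1 hsum i
  have h2 : Summable fun n : ℕ => (((Nat.factorial n : ℝ)⁻¹) • A ^ n) i j := by
    exact Pi.summable.1 h1 j
  have e : (∑' n : ℕ, ((Nat.factorial n : ℝ)⁻¹) • A ^ n) i j = ∑' n : ℕ, (((Nat.factorial n : ℝ)⁻¹) • A ^ n) i j := by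
    exact (congrFun (tsum_apply hsum) j).trans (tsum_apply h1)
  rw [e]
  have h0 : (((Nat.factorial 0 : ℝ)⁻¹) • A ^ 0) i j = (1 : Matrix (Fin 2) (Fin 2) ℝ) i j := by
    simp
  calc (1 : Matrix (Fin 2) (Fin 2) ℝ) i j = (((Nat.factorial 0 : ℝ)⁻¹) • A ^ 0) i j := h0.symm
    _ ≤ ∑' n : ℕ, (((Nat.factorial n : ℝ)⁻¹) • A ^ n) i j := by
        refine Summable.le_tsum h2 0 fun n _ => ?_
        have hp := pow_entry_nonneg hA n i j
        simp only [Matrix.smul_apply, smul_eq_mul]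
        exact mul_nonneg (by positivity) hp

end Aux

theorem exp_tM_entries_ge_diag
    (ν₁ ν₂ : ℝ) (hν₁ : 0 < ν₁) (hν₂ : 0 < ν₂)
    (M : Matrix (Fin 2) (Fin 2) ℝ)
    (hM : M = !![-ν₁, ν₂; ν₁, -ν₂]) :
    ∀ t : ℝ, 0 ≤ t → ∀ i j : Fin 2,
      Real.exp (-t * (ν₁ + ν₂)) * (1 : Matrix (Fin 2) (Fin 2) ℝ) i j ≤ exp (t • M) i j := by
  intro t ht i j
  set N : Matrix (Fin 2) (Fin 2) ℝ := !![ν₂, ν₂; ν₁, ν₁] with hN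
  set c : ℝ := -t * (ν₁ + ν₂) with hc
  have hdecomp : t • M = Matrix.diagonal (fun _ => c) + t • N := by
    subst hM
    ext i j
    fin_cases i <;> fin_cases j <;>
      simp [hN, hc, Matrix.diagonal, Matrix.smul_apply] <;> ring
  have hcomm : Commute (Matrix.diagonal (fun _ : Fin 2 => c)) (t • N) := by
    have : Matrix.diagonal (fun _ : Fin 2 => c) = c • (1 : Matrix (Fin 2) (Fin 2) ℝ) := by
      ext i j; by_cases h : i = j <;> simp [h, Matrix.diagonal_apply, Matrix.one_apply]
    rw [this]
    exact (Commute.one_left (t • N)).smul_left c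
  have hexp : exp (t • M) = exp (Matrix.diagonal fun _ : Fin 2 => c) * exp (t • N) := by
    rw [hdecomp]
    exact Matrix.exp_add_of_commute _ _ hcomm
  have hdiag : exp (Matrix.diagonal fun _ : Fin 2 => c)
      = Matrix.diagonal fun _ : Fin 2 => Real.exp c := by
    have h : (exp fun _ : Fin 2 => c) = fun _ : Fin 2 => Real.exp c := by
      rw [Pi.exp_def, ← Real.exp_eq_exp_ℝ]
    rw [Matrix.exp_diagonal, h]
  have hNpos : ∀ i j, 0 ≤ (t • N) i j := by
    intro i j
    fin_cases i <;> fin_cases j <;> simp [hN] <;> positivity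
  have hE := one_le_exp_entry hNpos i j
  rw [hexp, hdiag, Matrix.diagonal_mul]
  calc Real.exp (-t * (ν₁ + ν₂)) * (1 : Matrix (Fin 2) (Fin 2) ℝ) i j
      ≤ Real.exp c * exp (t • N) i j :=
        mul_le_mul_of_nonneg_left (by rw [hc] at *; exact hE) (Real.exp_pos _).le
    _ = Real.exp c * exp (t • N) i j := rfl
end

section
/- For integers 0 ≤ m ≤ n and real r, ∫_ℝ e^{-v²} H_m(v + iπr/L) H_n(v - iπr/L) dv = √π · m! · 2^n · (-iπr/L)^{n-m} · L_m^{(n-m)}(-2π²r²/L²), where L_m^{(k)} is the generalized Laguerre polynomial. -/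
open Real Complex Polynomial MeasureTheory

/-- Physicists' Hermite polynomials (complex argument), via the standard recurrence. -/
noncomputable def hermiteC : ℕ → ℂ → ℂ
  | 0, _ => 1
  | 1, z => 2 * z
  | (n + 2), z => 2 * z * hermiteC (n + 1) z - 2 * ((n : ℂ) + 1) * hermiteC n z

/-- Generalized Laguerre polynomial L_m^{(k)}. -/
noncomputable def genLaguerre (m k : ℕ) (x : ℝ) : ℝ :=
  ∑ j ∈ Finset.range (m + 1),
    (-1) ^ j * (Nat.choose (m + k) (m - j) : ℝ) * x ^ j / (Nat.factorial j : ℝ)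

/-- polynomial version -/
noncomputable def HP : ℕ → Polynomial ℂ
  | 0 => 1
  | 1 => C 2 * X
  | (n + 2) => C 2 * X * HP (n + 1) - C (2 * ((n : ℂ) + 1)) * HP n

lemma HP_eval : ∀ n (z : ℂ), (HP n).eval z = hermiteC n z := by
  intro n
  induction n using Nat.twoStepInduction with
  | zero => intro z; simp [HP, hermiteC]
  | one => intro z; simp [HP, hermiteC]
  | more n ih1 ih2 =>
    intro z
    simp [HP, hermiteC, ih1, ih2]
    try ring

lemma HP_succ_succ (n : ℕ) :
    HP (n + 1) = C 2 * X * HP n - C (2 * (n : ℂ)) * HP (n - 1) := by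
  match n with
  | 0 => simp [HP]
  | (k + 1) => rw [show k + 1 + 1 = k + 2 from rfl, HP]; push_cast; ring_nf

lemma HP_natDegree_le : ∀ n, (HP n).natDegree ≤ n := by
  intro n
  induction n using Nat.twoStepInduction with
  | zero => simp [HP]
  | one =>
    simp only [HP]
    exact le_trans (natDegree_mul_le) (by simp)
  | more n ih1 ih2 =>
    simp only [HP]
    refine le_trans (natDegree_sub_le _ _) (max_le ?_ ?_)
    · refine le_trans (natDegree_mul_le) ?_
      have : (C (2:ℂ) * X).natDegree ≤ 1 := le_trans natDegree_mul_le (by simp)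
      omega
    · refine le_trans (natDegree_mul_le) ?_
      simp only [natDegree_C, zero_add]
      omega

lemma HP_derivative : ∀ n, derivative (HP n) = C (2 * (n : ℂ)) * HP (n - 1) := by
  intro n
  induction n using Nat.twoStepInduction with
  | zero => simp [HP]
  | one => simp [HP]
  | more n ih1 ih2 =>
    rw [show n + 2 = (n + 1) + 1 from rfl, HP_succ_succ (n + 1)]
    simp only [derivative_sub, derivative_mul, derivative_C, derivative_X, ih1, ih2,
      Nat.add_sub_cancel]
    rw [HP_succ_succ n]
    push_cast
    simp only [map_add, map_mul, map_one, map_ofNat]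
    ring

lemma HP_iterate_derivative : ∀ k n : ℕ, k ≤ n →
    derivative^[k] (HP n) = C ((2 ^ k * Nat.descFactorial n k : ℕ) : ℂ) * HP (n - k) := by
  intro k
  induction k with
  | zero => intro n _; simp
  | succ k ih =>
    intro n hk
    rw [Function.iterate_succ_apply', ih n (by omega), derivative_mul, derivative_C,
      HP_derivative]
    rw [Nat.descFactorial_succ]
    have h1 : n - k - 1 = n - (k + 1) := by omega
    have h2 : ((n : ℂ) - k) = ((n - k : ℕ) : ℂ) := by
      rw [Nat.cast_sub (by omega)]
    rw [h1]
    push_cast [Nat.cast_sub (show k ≤ n by omega)]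
    rw [zero_mul, zero_add, ← mul_assoc, ← C_mul]
    congr 2
    ring

lemma hasseDeriv_HP_eval (k n : ℕ) (hk : k ≤ n) (x : ℂ) :
    (Polynomial.hasseDeriv k (HP n)).eval x
      = (2 ^ k * Nat.choose n k : ℂ) * hermiteC (n - k) x := by
  have h := congrFun (Polynomial.factorial_smul_hasseDeriv (R := ℂ) k) (HP n)
  simp only [LinearMap.smul_apply] at h
  have h2 := congrArg (Polynomial.eval x) h
  rw [HP_iterate_derivative k n hk] at h2
  simp only [eval_smul, smul_eq_mul, eval_mul, eval_C, nsmul_eq_mul, eval_natCast] at h2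
  rw [HP_eval] at h2
  have hfac : (Nat.factorial k : ℂ) ≠ 0 := Nat.cast_ne_zero.mpr (Nat.factorial_ne_zero k)
  apply mul_left_cancel₀ hfac
  rw [h2]
  push_cast [Nat.descFactorial_eq_factorial_mul_choose]
  ring

lemma hermiteC_add (n : ℕ) (x y : ℂ) :
    hermiteC n (x + y) = ∑ k ∈ Finset.range (n + 1),
      (Nat.choose n k : ℂ) * hermiteC (n - k) x * (2 * y) ^ k := by
  rw [← HP_eval, show x + y = y + x from add_comm x y, ← Polynomial.taylor_eval]
  rw [Polynomial.eval_eq_sum_range' (n := n + 1)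
    (by rw [Polynomial.natDegree_taylor]; exact Nat.lt_succ_of_le (HP_natDegree_le n))]
  refine Finset.sum_congr rfl fun k hk => ?_
  have hk' : k ≤ n := by have := Finset.mem_range.mp hk; omega
  rw [Polynomial.taylor_coeff, hasseDeriv_HP_eval k n hk', mul_pow]
  ring

open MeasureTheory

noncomputable def gm (p : ℕ) : ℝ := ∫ x : ℝ, x ^ p * Real.exp (-x ^ 2)

lemma integrable_pow_gauss (p : ℕ) :
    Integrable (fun x : ℝ => x ^ p * Real.exp (-x ^ 2)) := by
  have h := integrable_rpow_mul_exp_neg_mul_sq (b := 1) one_pos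
    (s := p) (lt_of_lt_of_le (by norm_num) (Nat.cast_nonneg p))
  simpa [Real.rpow_natCast] using h

lemma gm_odd (p : ℕ) (hp : Odd p) : gm p = 0 := by
  have h1 : ∫ x : ℝ, (-x) ^ p * Real.exp (-(-x) ^ 2) = gm p := by
    exact MeasureTheory.integral_neg_eq_self (fun x => x ^ p * Real.exp (-x ^ 2)) _
  have h2 : ∀ x : ℝ, (-x) ^ p * Real.exp (-(-x) ^ 2) = -(x ^ p * Real.exp (-x ^ 2)) := by
    intro x
    rw [hp.neg_pow, neg_sq]
    ring
  simp_rw [h2, integral_neg] at h1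
  have : -gm p = gm p := h1
  linarith

lemma Gamma_nat_add_half (j : ℕ) :
    Real.Gamma (j + 1 / 2) = Real.sqrt π * (Nat.factorial (2 * j)) / (4 ^ j * Nat.factorial j) := by
  induction j with
  | zero =>
    rw [show ((0:ℕ):ℝ) + 1 / 2 = 1 / 2 by norm_num, Real.Gamma_one_half_eq]
    simp
  | succ j ih =>
    have hne : (j : ℝ) + 1 / 2 ≠ 0 := by positivity
    have h : ((j : ℝ) + 1) + 1 / 2 = ((j : ℝ) + 1 / 2) + 1 := by ring
    rw [Nat.cast_succ, h, Real.Gamma_add_one hne, ih]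
    rw [show 2 * (j + 1) = (2 * j + 1) + 1 by ring, Nat.factorial_succ, Nat.factorial_succ,
      Nat.factorial_succ]
    have h4 : (4 : ℝ) ^ (j + 1) = 4 * 4 ^ j := by ring
    push_cast [h4]
    have hfj : (Nat.factorial j : ℝ) ≠ 0 := Nat.cast_ne_zero.mpr (Nat.factorial_ne_zero j)
    have h4j : (4 : ℝ) ^ j ≠ 0 := by positivity
    field_simp
    ring

lemma gm_even (j : ℕ) :
    gm (2 * j) = Real.sqrt π * (Nat.factorial (2 * j)) / (4 ^ j * Nat.factorial j) := by
  have habs : (fun x : ℝ => x ^ (2 * j) * Real.exp (-x ^ 2))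
      = fun x : ℝ => |x| ^ (2 * j) * Real.exp (-|x| ^ 2) := by
    funext x
    rw [pow_mul, pow_mul]
    simp [_root_.sq_abs]
  have h2 : gm (2 * j) = 2 * ∫ x in Set.Ioi (0:ℝ), x ^ (2 * j) * Real.exp (-x ^ 2) := by
    rw [gm]
    conv_lhs => rw [habs]
    exact integral_comp_abs (f := fun x => x ^ (2 * j) * Real.exp (-x ^ 2))
  have h3 := _root_.integral_rpow_mul_exp_neg_rpow (p := 2) (q := (2 * j : ℕ)) (by norm_num)
    (lt_of_lt_of_le (by norm_num) (Nat.cast_nonneg _))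
  have h4 : ∀ x : ℝ, x ^ ((2 * j : ℕ) : ℝ) * Real.exp (-x ^ (2:ℝ)) =
      x ^ (2 * j) * Real.exp (-x ^ 2) := by
    intro x
    rw [Real.rpow_natCast, show (2:ℝ) = ((2:ℕ):ℝ) by norm_num, Real.rpow_natCast]
    try norm_num
  simp_rw [h4] at h3
  rw [h2, h3, show ((2 * j : ℕ) + 1 : ℝ) / 2 = j + 1/2 by push_cast; ring,
    _root_.Gamma_nat_add_half]
  ring

lemma integrable_poly_gauss (P : Polynomial ℂ) :
    Integrable (fun v : ℝ => Polynomial.eval (v : ℂ) P * (Real.exp (-v ^ 2) : ℂ)) := by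
  have h : (fun v : ℝ => Polynomial.eval (v : ℂ) P * (Real.exp (-v ^ 2) : ℂ))
      = fun v : ℝ => ∑ i ∈ Finset.range (P.natDegree + 1),
        P.coeff i * (((v ^ i * Real.exp (-v ^ 2) : ℝ)) : ℂ) := by
    funext v
    rw [Polynomial.eval_eq_sum_range, Finset.sum_mul]
    refine Finset.sum_congr rfl fun i _ => ?_
    push_cast
    ring
  rw [h]
  refine integrable_finset_sum _ fun i _ => ?_
  exact ((integrable_pow_gauss i).ofReal).const_mul _

lemma integrable_monomial_hermite (p k : ℕ) :
    Integrable (fun v : ℝ => (v : ℂ) ^ p * hermiteC k v * (Real.exp (-v ^ 2) : ℂ)) := by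
  have h := integrable_poly_gauss (Polynomial.X ^ p * HP k)
  simp only [Polynomial.eval_mul, Polynomial.eval_pow, Polynomial.eval_X, HP_eval] at h
  exact h

lemma integrable_hermite_mul (i j : ℕ) :
    Integrable (fun v : ℝ => hermiteC i v * hermiteC j v * (Real.exp (-v ^ 2) : ℂ)) := by
  have h := integrable_poly_gauss (HP i * HP j)
  simp only [Polynomial.eval_mul, HP_eval] at h
  exact h

noncomputable def Tv : ℕ → ℕ → ℝ
  | 0, p => gm p
  | 1, p => 2 * gm (p + 1)
  | (k + 2), p => 2 * Tv (k + 1) (p + 1) - 2 * (k + 1) * Tv k p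

lemma MC_eq : ∀ k p, (∫ v : ℝ, (v : ℂ) ^ p * hermiteC k v * (Real.exp (-v ^ 2) : ℂ))
    = ((Tv k p : ℝ) : ℂ) := by
  intro k
  induction k using Nat.twoStepInduction with
  | zero =>
    intro p
    have h : (fun v : ℝ => (v : ℂ) ^ p * hermiteC 0 v * (Real.exp (-v ^ 2) : ℂ))
        = fun v : ℝ => (((v ^ p * Real.exp (-v ^ 2) : ℝ)) : ℂ) := by
      funext v; simp only [hermiteC]; push_cast; ring
    rw [h]
    exact integral_ofReal
  | one =>
    intro p
    have h : (fun v : ℝ => (v : ℂ) ^ p * hermiteC 1 v * (Real.exp (-v ^ 2) : ℂ))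
        = fun v : ℝ => (2 : ℂ) * (((v ^ (p + 1) * Real.exp (-v ^ 2) : ℝ)) : ℂ) := by
      funext v; simp only [hermiteC]; push_cast; ring
    rw [h, integral_const_mul]
    have h2 : (∫ a : ℝ, ((a ^ (p + 1) * Real.exp (-a ^ 2) : ℝ) : ℂ)) = ((gm (p+1) : ℝ) : ℂ) :=
      integral_ofReal
    rw [h2]
    show _ = ((2 * gm (p+1) : ℝ) : ℂ)
    push_cast
    ring
  | more k ih1 ih2 =>
    intro p
    have h : (fun v : ℝ => (v : ℂ) ^ p * hermiteC (k + 2) v * (Real.exp (-v ^ 2) : ℂ))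
        = fun v : ℝ => (2 : ℂ) * ((v : ℂ) ^ (p + 1) * hermiteC (k + 1) v * (Real.exp (-v ^ 2) : ℂ))
          - (2 * ((k : ℂ) + 1)) * ((v : ℂ) ^ p * hermiteC k v * (Real.exp (-v ^ 2) : ℂ)) := by
      funext v
      show (v : ℂ) ^ p * (2 * v * hermiteC (k + 1) v - 2 * ((k : ℂ) + 1) * hermiteC k v) * _ = _
      ring
    rw [h, integral_sub (((integrable_monomial_hermite (p+1) (k+1))).const_mul _)
      ((integrable_monomial_hermite p k).const_mul _),
      integral_const_mul, integral_const_mul, ih2, ih1]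
    show _ = ((2 * Tv (k + 1) (p + 1) - 2 * (k + 1) * Tv k p : ℝ) : ℂ)
    push_cast
    ring

lemma Tv_odd : ∀ k, ∀ p, Odd (k + p) → Tv k p = 0 := by
  intro k
  induction k using Nat.twoStepInduction with
  | zero => intro p hp; exact gm_odd p (by simpa using hp)
  | one =>
    intro p hp
    have : Odd (p + 1) := by rw [Nat.odd_iff] at *; omega
    show 2 * gm (p + 1) = 0
    rw [gm_odd _ this]; ring
  | more k ih1 ih2 =>
    intro p hp
    show 2 * Tv (k + 1) (p + 1) - 2 * (k + 1) * Tv k p = 0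
    rw [ih1 p (by rw [Nat.odd_iff] at *; omega),
      ih2 (p + 1) (by rw [Nat.odd_iff] at *; omega)]
    ring

lemma Tv_diag : ∀ k j, Tv k (k + 2 * j)
    = Real.sqrt π * Nat.factorial (k + 2 * j) / (2 ^ (2 * j) * Nat.factorial j) := by
  intro k
  induction k using Nat.twoStepInduction with
  | zero =>
    intro j
    show gm (0 + 2 * j) = _
    rw [zero_add, gm_even j, show (4 : ℝ) ^ j = 2 ^ (2 * j) by rw [pow_mul]; norm_num]
  | one =>
    intro j
    show 2 * gm (1 + 2 * j + 1) = _
    rw [show 1 + 2 * j + 1 = 2 * (j + 1) by ring, gm_even (j + 1)]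
    rw [show 2 * (j + 1) = (2 * j + 1) + 1 by ring, Nat.factorial_succ,
      Nat.factorial_succ (n := j), show 1 + 2 * j = 2 * j + 1 by ring]
    have h1 : (Nat.factorial j : ℝ) ≠ 0 := Nat.cast_ne_zero.mpr (Nat.factorial_ne_zero j)
    have h2 : (4 : ℝ) ^ (j + 1) = 2 * 2 ^ (2 * j) * 2 := by rw [pow_succ, pow_mul]; ring
    push_cast [h2]
    field_simp
    ring
  | more k ih1 ih2 =>
    intro j
    show 2 * Tv (k + 1) (k + 2 + 2 * j + 1) - 2 * (k + 1) * Tv k (k + 2 + 2 * j) = _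
    rw [show k + 2 + 2 * j + 1 = (k + 1) + 2 * (j + 1) by ring,
      show k + 2 + 2 * j = k + 2 * (j + 1) by ring, ih2 (j + 1), ih1 (j + 1)]
    rw [show (k + 1) + 2 * (j + 1) = (k + 2 * (j + 1)) + 1 by ring, Nat.factorial_succ,
      Nat.factorial_succ (n := j)]
    have h1 : (Nat.factorial j : ℝ) ≠ 0 := Nat.cast_ne_zero.mpr (Nat.factorial_ne_zero j)
    have h2 : (2 : ℝ) ^ (2 * (j + 1)) = 2 ^ (2 * j) * 4 := by rw [pow_mul, pow_mul]; ring
    push_cast [h2]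
    field_simp
    ring

lemma Tv_lt : ∀ k, ∀ p, p < k → Tv k p = 0 := by
  intro k
  induction k using Nat.twoStepInduction with
  | zero => intro p hp; omega
  | one =>
    intro p hp
    have : p = 0 := by omega
    subst this
    show 2 * gm 1 = 0
    rw [gm_odd 1 (by norm_num)]; ring
  | more k ih1 ih2 =>
    intro p hp
    show 2 * Tv (k + 1) (p + 1) - 2 * (k + 1) * Tv k p = 0
    rcases lt_trichotomy p k with h | h | h
    · rw [ih1 p h, ih2 (p + 1) (by omega)]; ring
    · subst h
      have d1 := Tv_diag (p + 1) 0
      have d2 := Tv_diag p 0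
      simp only [mul_zero, add_zero, pow_zero, Nat.factorial_zero, Nat.cast_one, one_mul,
        mul_one] at d1 d2
      rw [d1, d2, Nat.factorial_succ]
      push_cast
      ring
    · have hp1 : p = k + 1 := by omega
      subst hp1
      rw [Tv_odd (k + 1) (k + 1 + 1) (by rw [Nat.odd_iff]; omega),
        Tv_odd k (k + 1) (by rw [Nat.odd_iff]; omega)]
      ring

lemma HP_coeff : ∀ n, (HP n).coeff n = 2 ^ n := by
  intro n
  induction n using Nat.twoStepInduction with
  | zero => simp [HP]
  | one =>
    show (Polynomial.C 2 * Polynomial.X : Polynomial ℂ).coeff 1 = 2 ^ 1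
    rw [Polynomial.coeff_C_mul, Polynomial.coeff_X_one]
    norm_num
  | more n ih1 ih2 =>
    show (Polynomial.C 2 * Polynomial.X * HP (n + 1)
      - Polynomial.C (2 * ((n : ℂ) + 1)) * HP n).coeff (n + 2) = (2 : ℂ) ^ (n + 2)
    rw [Polynomial.coeff_sub, Polynomial.coeff_C_mul,
      Polynomial.coeff_eq_zero_of_natDegree_lt (lt_of_le_of_lt (HP_natDegree_le n) (by omega)),
      mul_assoc, Polynomial.coeff_C_mul, Polynomial.coeff_X_mul, ih2]
    ring

lemma ortho_le (i j : ℕ) (hij : j ≤ i) :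
    (∫ v : ℝ, hermiteC i v * hermiteC j v * (Real.exp (-v ^ 2) : ℂ))
      = if i = j then ((Real.sqrt π * 2 ^ i * Nat.factorial i : ℝ) : ℂ) else 0 := by
  have hexp : (fun v : ℝ => hermiteC i v * hermiteC j v * (Real.exp (-v ^ 2) : ℂ))
      = fun v : ℝ => ∑ d ∈ Finset.range (j + 1),
        (HP j).coeff d * ((v : ℂ) ^ d * hermiteC i v * (Real.exp (-v ^ 2) : ℂ)) := by
    funext v
    rw [show hermiteC j (v : ℂ) = (HP j).eval (v : ℂ) from (HP_eval j _).symm,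
      Polynomial.eval_eq_sum_range' (Nat.lt_succ_of_le (HP_natDegree_le j))]
    rw [Finset.mul_sum, Finset.sum_mul]
    refine Finset.sum_congr rfl fun d _ => ?_
    ring
  rw [hexp, integral_finset_sum _ fun d _ => (integrable_monomial_hermite d i).const_mul _]
  simp_rw [integral_const_mul, MC_eq]
  rcases eq_or_lt_of_le hij with heq | hlt
  · subst heq
    rw [if_pos rfl]
    rw [Finset.sum_eq_single_of_mem j (Finset.self_mem_range_succ j)
      (fun d hdmem hd => by
        have hlt : d < j := by have := Finset.mem_range.mp hdmem; omega
        rw [Tv_lt j d hlt]; simp)]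
    have d0 := Tv_diag j 0
    simp only [mul_zero, add_zero, pow_zero, Nat.factorial_zero, Nat.cast_one, one_mul,
      mul_one] at d0
    rw [HP_coeff, d0]
    push_cast
    ring
  · rw [if_neg (by omega)]
    refine Finset.sum_eq_zero fun d hd => ?_
    rw [Tv_lt i d (by have := Finset.mem_range.mp hd; omega)]
    simp

lemma ortho (i j : ℕ) :
    (∫ v : ℝ, hermiteC i v * hermiteC j v * (Real.exp (-v ^ 2) : ℂ))
      = if i = j then ((Real.sqrt π * 2 ^ i * Nat.factorial i : ℝ) : ℂ) else 0 := by
  rcases le_or_gt j i with h | h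
  · exact ortho_le i j h
  · have hcomm : (fun v : ℝ => hermiteC i v * hermiteC j v * (Real.exp (-v ^ 2) : ℂ))
        = fun v : ℝ => hermiteC j v * hermiteC i v * (Real.exp (-v ^ 2) : ℂ) := by
      funext v; ring
    rw [hcomm, ortho_le j i h.le, if_neg (by omega), if_neg (by omega)]


theorem hermite_shifted_product_integral (L : ℝ) (hL : 0 < L)
    (m n : ℕ) (hmn : m ≤ n) (r : ℝ) :
    (∫ v : ℝ, ((Real.exp (-v ^ 2) : ℝ) : ℂ) *
        hermiteC m ((v : ℂ) + Complex.I * Real.pi * r / L) *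
        hermiteC n ((v : ℂ) - Complex.I * Real.pi * r / L)) =
      ((Real.sqrt Real.pi * (Nat.factorial m : ℝ) * 2 ^ n : ℝ) : ℂ) *
        (-Complex.I * Real.pi * r / L) ^ (n - m) *
        ((genLaguerre m (n - m) (-2 * Real.pi ^ 2 * r ^ 2 / L ^ 2) : ℝ) : ℂ) := by
  obtain ⟨e, rfl⟩ : ∃ e, n = m + e := ⟨n - m, by omega⟩
  simp only [Nat.add_sub_cancel_left]
  set a : ℂ := Complex.I * Real.pi * r / L with ha
  have hnega : (-Complex.I * (Real.pi : ℂ) * (r : ℂ) / (L : ℂ)) = -a := by rw [ha]; ring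
  have hx : ((-2 * Real.pi ^ 2 * r ^ 2 / L ^ 2 : ℝ) : ℂ) = 2 * a ^ 2 := by
    rw [ha]
    push_cast
    rw [div_pow, mul_pow, mul_pow, Complex.I_sq]
    ring
  have key : (fun v : ℝ => ((Real.exp (-v ^ 2) : ℝ) : ℂ) *
        hermiteC m ((v : ℂ) + a) * hermiteC (m + e) ((v : ℂ) - a))
      = fun v : ℝ => ∑ k ∈ Finset.range (m + 1), ∑ l ∈ Finset.range (m + e + 1),
          ((Nat.choose m k : ℂ) * (2 * a) ^ k * (Nat.choose (m + e) l : ℂ) * (2 * -a) ^ l) *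
            (hermiteC (m - k) v * hermiteC (m + e - l) v * ((Real.exp (-v ^ 2) : ℝ) : ℂ)) := by
    funext v
    rw [hermiteC_add m (v : ℂ) a, show (v : ℂ) - a = (v : ℂ) + -a by ring,
      hermiteC_add (m + e) (v : ℂ) (-a), mul_assoc, Finset.sum_mul_sum, Finset.mul_sum]
    refine Finset.sum_congr rfl fun k _ => ?_
    rw [Finset.mul_sum]
    refine Finset.sum_congr rfl fun l _ => ?_
    ring
  rw [key, integral_finset_sum _ (fun k _ => integrable_finset_sum _
    (fun l _ => (integrable_hermite_mul (m - k) (m + e - l)).const_mul _))]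
  have step : ∀ k ∈ Finset.range (m + 1),
      (∫ v : ℝ, ∑ l ∈ Finset.range (m + e + 1),
        ((Nat.choose m k : ℂ) * (2 * a) ^ k * (Nat.choose (m + e) l : ℂ) * (2 * -a) ^ l) *
          (hermiteC (m - k) v * hermiteC (m + e - l) v * ((Real.exp (-v ^ 2) : ℝ) : ℂ)))
      = ((Nat.choose m k : ℂ) * (2 * a) ^ k * (Nat.choose (m + e) (k + e) : ℂ)
          * (2 * -a) ^ (k + e)) *
          ((Real.sqrt Real.pi * 2 ^ (m - k) * Nat.factorial (m - k) : ℝ) : ℂ) := by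
    intro k hk
    have hkm : k ≤ m := by have := Finset.mem_range.mp hk; omega
    rw [integral_finset_sum _ (fun l _ => (integrable_hermite_mul (m - k) (m + e - l)).const_mul _)]
    have hcol : ∀ l ∈ Finset.range (m + e + 1),
        (∫ v : ℝ, ((Nat.choose m k : ℂ) * (2 * a) ^ k * (Nat.choose (m + e) l : ℂ)
            * (2 * -a) ^ l) *
          (hermiteC (m - k) v * hermiteC (m + e - l) v * ((Real.exp (-v ^ 2) : ℝ) : ℂ)))
        = ((Nat.choose m k : ℂ) * (2 * a) ^ k * (Nat.choose (m + e) l : ℂ) * (2 * -a) ^ l) *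
          (if m - k = m + e - l then
            ((Real.sqrt Real.pi * 2 ^ (m - k) * Nat.factorial (m - k) : ℝ) : ℂ) else 0) := by
      intro l _
      rw [integral_const_mul, ortho (m - k) (m + e - l)]
    rw [Finset.sum_congr rfl hcol]
    rw [Finset.sum_eq_single_of_mem (k + e) (Finset.mem_range.mpr (by omega))
      (fun l hl hne => by
        rw [if_neg (by have := Finset.mem_range.mp hl; omega)]
        ring)]
    rw [if_pos (by omega)]
  rw [Finset.sum_congr rfl step, hnega]
  unfold genLaguerre
  push_cast [Nat.add_sub_cancel_left]
  rw [Finset.mul_sum]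
  refine Finset.sum_congr rfl fun k hk => ?_
  have hkm : k ≤ m := by have := Finset.mem_range.mp hk; omega
  obtain ⟨q, rfl⟩ : ∃ q, m = k + q := ⟨m - k, by omega⟩
  simp only [Nat.add_sub_cancel_left]
  have hch : (Nat.choose (k + q + e) (k + e) : ℂ) = (Nat.choose (k + q + e) q : ℂ) := by
    rw [show k + e = (k + q + e) - q by omega, Nat.choose_symm (by omega)]
  have hx2 : (-2 * (Real.pi : ℂ) ^ 2 * (r : ℂ) ^ 2 / (L : ℂ) ^ 2) = 2 * a ^ 2 := by
    rw [ha, div_pow, mul_pow, mul_pow, Complex.I_sq]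
    ring
  have hfac : ((Nat.factorial (k + q) : ℕ) : ℂ)
      = (Nat.choose (k + q) k : ℂ) * (Nat.factorial k : ℂ) * (Nat.factorial q : ℂ) := by
    have := Nat.choose_mul_factorial_mul_factorial (show k ≤ k + q by omega)
    rw [Nat.add_sub_cancel_left] at this
    push_cast [← this]
    ring
  have hk0 : ((Nat.factorial k : ℕ) : ℂ) ≠ 0 :=
    Nat.cast_ne_zero.mpr (Nat.factorial_ne_zero k)
  rw [hch]
  push_cast
  rw [hx2, hfac, show (2 * -a : ℂ) = (-1) * (2 * a) by ring, mul_pow ((-1) : ℂ) (2 * a),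
    show (-a : ℂ) = (-1) * a by ring, mul_pow ((-1) : ℂ) a, pow_add, pow_add]
  field_simp
  ring
end
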